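/- For each integer m ≥ 1 there exists a constant c_{2m} ∈ (0,∞) such that for all θ ∈ (0,1): −c_{2m} ≤ (1−θ²)^{2m}·ξ_{2m}(θ) < 0, where ξ_{2m}(θ) = (2m)!·χ_{2m+1}(θ). Moreover there exist constants 0 < c_{m,1}, c_{m,2} such that −c_{m,1} ≤ (1−θ²)^{2m+1}·ξ_{2m+1}(θ) ≤ −c_{m,2} < 0 for all θ ∈ (−1,1), where ξ_{2m+1}(θ) = −(2m+1)!·χ_{2m+2}(θ). -/

import Mathlib

open Real MeasureTheory Set

/-- `k θ x y = sgn(y) / (sgn(y)·θ + exp(2(xy)⁺))`. -/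
noncomputable def k (θ x y : ℝ) : ℝ :=
  Real.sign y / (Real.sign y * θ + Real.exp (2 * max 0 (x * y)))

/-- Transition density at time 1 of the skew Brownian motion of parameter `θ`. -/
noncomputable def p (θ x y : ℝ) : ℝ :=
  (Real.sqrt (2 * Real.pi))⁻¹ *
    (if 0 ≤ x ∧ 0 ≤ y then Real.exp (-(x - y) ^ 2 / 2) + θ * Real.exp (-(x + y) ^ 2 / 2)
     else if x ≤ 0 ∧ y ≤ 0 then Real.exp (-(x - y) ^ 2 / 2) - θ * Real.exp (-(x + y) ^ 2 / 2)
     else if 0 ≤ x then (1 - θ) * Real.exp (-(x - y) ^ 2 / 2)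
     else (1 + θ) * Real.exp (-(x - y) ^ 2 / 2))

/-- Invariant density of the skew Brownian motion of parameter `θ`. -/
noncomputable def μinv (θ x : ℝ) : ℝ := if 0 ≤ x then 1 + θ else 1 - θ

/-- `χ_m^{++}(θ)`. -/
noncomputable def chiPP (m : ℕ) (θ : ℝ) : ℝ :=
  ∫ x in Ici (0 : ℝ), ∫ y in Ici (0 : ℝ), (k θ x y) ^ m * p θ x y * μinv θ x

/-- `χ_m^{--}(θ)`. -/
noncomputable def chiMM (m : ℕ) (θ : ℝ) : ℝ :=
  ∫ x in Iic (0 : ℝ), ∫ y in Iic (0 : ℝ), (k θ x y) ^ m * p θ x y * μinv θ x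

/-- `χ_m^{+-}(θ)`. -/
noncomputable def chiPM (m : ℕ) (θ : ℝ) : ℝ :=
  ∫ x in Ici (0 : ℝ), ∫ y in Iic (0 : ℝ), (k θ x y) ^ m * p θ x y * μinv θ x

/-- `χ_m^{-+}(θ)`. -/
noncomputable def chiMP (m : ℕ) (θ : ℝ) : ℝ :=
  ∫ x in Iic (0 : ℝ), ∫ y in Ici (0 : ℝ), (k θ x y) ^ m * p θ x y * μinv θ x

/-- `χ_m(θ)`, the sum over the four quadrants. -/
noncomputable def chi (m : ℕ) (θ : ℝ) : ℝ :=
  chiPP m θ + chiMM m θ + chiPM m θ + chiMP m θ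

/-- `ζ_m(θ)`. -/
noncomputable def zeta (m : ℕ) (θ : ℝ) : ℝ :=
  chiPP m θ + chiPM m θ - chiMM m θ - chiMP m θ

/-- `ξ_m(θ) = m!·(−1)^m·χ_{m+1}(θ)`. -/
noncomputable def xi (m : ℕ) (θ : ℝ) : ℝ :=
  (m.factorial : ℝ) * (-1) ^ m * chi (m + 1) θ

noncomputable def Eex (x y : ℝ) : ℝ := Real.exp (2 * max 0 (x * y))

noncomputable def gau (x y : ℝ) : ℝ := Real.exp (-(x + y) ^ 2 / 2)

noncomputable def Jint (j : ℕ) (θ : ℝ) : ℝ :=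
  ∫ x in Ici (0 : ℝ), ∫ y in Ici (0 : ℝ), ((θ + Eex x y) ^ j)⁻¹ * gau x y

noncomputable def Pint : ℝ :=
  ∫ x in Ici (0 : ℝ), ∫ y in Ici (0 : ℝ), gau x y

noncomputable def Kint : ℝ := ∫ y in Ici (0 : ℝ), Real.exp (-y ^ 2 / 2)

lemma one_le_Eex (x y : ℝ) : 1 ≤ Eex x y := by
  rw [Eex, ← Real.exp_zero]
  exact Real.exp_le_exp.2 (by positivity)

lemma Eex_cont : Continuous fun q : ℝ × ℝ => Eex q.1 q.2 := by
  unfold Eex; fun_prop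

lemma gau_pos (x y : ℝ) : 0 < gau x y := Real.exp_pos _

lemma gau_cont : Continuous fun q : ℝ × ℝ => gau q.1 q.2 := by
  unfold gau; fun_prop

lemma gau_le {x y : ℝ} (hx : 0 ≤ x) (hy : 0 ≤ y) :
    gau x y ≤ Real.exp (-x ^ 2 / 2) * Real.exp (-y ^ 2 / 2) := by
  rw [gau, ← Real.exp_add]
  exact Real.exp_le_exp.2 (by nlinarith [mul_nonneg hx hy])

lemma integrable_gauss1 : Integrable (fun y : ℝ => Real.exp (-y ^ 2 / 2)) := by
  have h := integrable_exp_neg_mul_sq (show (0:ℝ) < 1/2 by norm_num)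
  have e : (fun y : ℝ => Real.exp (-y ^ 2 / 2)) = fun y => Real.exp (-(1/2) * y ^ 2) := by
    funext y; congr 1; ring
  rw [e]; exact h

lemma Kint_nonneg : 0 ≤ Kint :=
  setIntegral_nonneg measurableSet_Ici fun y _ => (Real.exp_pos _).le

section gadget

variable {w : ℝ → ℝ → ℝ} {B : ℝ}

lemma inner_integrable (hw : Continuous fun q : ℝ × ℝ => w q.1 q.2)
    (hB : ∀ x y, |w x y| ≤ B) {x : ℝ} (hx : 0 ≤ x) :
    IntegrableOn (fun y => w x y * gau x y) (Ici 0) := by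
  have hcw : Continuous fun y => w x y :=
    hw.curry_right
  have hcg : Continuous fun y => gau x y :=
    gau_cont.curry_right
  refine Integrable.mono' (g := fun y => B * Real.exp (-y ^ 2 / 2))
    ((integrable_gauss1.const_mul B).restrict) (hcw.mul hcg).aestronglyMeasurable ?_
  refine (ae_restrict_iff' measurableSet_Ici).2 (Filter.Eventually.of_forall fun y hy => ?_)
  have h1 : gau x y ≤ Real.exp (-y ^ 2 / 2) := by
    rw [gau]
    exact Real.exp_le_exp.2 (by nlinarith [mul_nonneg hx (mem_Ici.1 hy)])
  calc ‖w x y * gau x y‖ = |w x y| * |gau x y| := abs_mul _ _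
    _ ≤ B * Real.exp (-y ^ 2 / 2) := by
        refine mul_le_mul (hB x y) ?_ (abs_nonneg _) (le_trans (abs_nonneg _) (hB 0 0))
        rw [abs_of_pos (gau_pos x y)]; exact h1

lemma Fmeas (hw : Continuous fun q : ℝ × ℝ => w q.1 q.2) :
    AEStronglyMeasurable (fun x => ∫ y in Ici (0:ℝ), w x y * gau x y)
      (volume.restrict (Ici 0)) := by
  have h : StronglyMeasurable fun q : ℝ × ℝ => w q.1 q.2 * gau q.1 q.2 :=
    (hw.mul gau_cont).stronglyMeasurable
  exact h.integral_prod_right'.aestronglyMeasurable.restrict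

lemma inner_bound (hw : Continuous fun q : ℝ × ℝ => w q.1 q.2)
    (hB : ∀ x y, |w x y| ≤ B) {x : ℝ} (hx : 0 ≤ x) :
    |∫ y in Ici (0:ℝ), w x y * gau x y| ≤ B * Kint * Real.exp (-x ^ 2 / 2) := by
  have hB0 : 0 ≤ B := le_trans (abs_nonneg _) (hB 0 0)
  have h1 : |∫ y in Ici (0:ℝ), w x y * gau x y| ≤ ∫ y in Ici (0:ℝ), |w x y * gau x y| :=
    by simpa only [Real.norm_eq_abs] using
      norm_integral_le_integral_norm (μ := volume.restrict (Ici 0)) (fun y => w x y * gau x y)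
  have h2 : ∫ y in Ici (0:ℝ), |w x y * gau x y|
      ≤ ∫ y in Ici (0:ℝ), (B * Real.exp (-x ^ 2 / 2)) * Real.exp (-y ^ 2 / 2) := by
    refine setIntegral_mono_on ((inner_integrable hw hB hx).abs)
      (((integrable_gauss1.const_mul _)).restrict) measurableSet_Ici fun y hy => ?_
    rw [abs_mul, abs_of_pos (gau_pos x y)]
    calc |w x y| * gau x y ≤ B * (Real.exp (-x ^ 2 / 2) * Real.exp (-y ^ 2 / 2)) := by
          exact mul_le_mul (hB x y) (gau_le hx (mem_Ici.1 hy)) (gau_pos x y).le hB0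
      _ = (B * Real.exp (-x ^ 2 / 2)) * Real.exp (-y ^ 2 / 2) := by ring
  have h3 : ∫ y in Ici (0:ℝ), (B * Real.exp (-x ^ 2 / 2)) * Real.exp (-y ^ 2 / 2)
      = (B * Real.exp (-x ^ 2 / 2)) * Kint := integral_const_mul _ _
  calc |∫ y in Ici (0:ℝ), w x y * gau x y| ≤ (B * Real.exp (-x ^ 2 / 2)) * Kint := by
        rw [← h3]; exact le_trans h1 h2
    _ = B * Kint * Real.exp (-x ^ 2 / 2) := by ring

lemma outer_integrable (hw : Continuous fun q : ℝ × ℝ => w q.1 q.2)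
    (hB : ∀ x y, |w x y| ≤ B) :
    IntegrableOn (fun x => ∫ y in Ici (0:ℝ), w x y * gau x y) (Ici 0) := by
  refine Integrable.mono' (g := fun x => (B * Kint) * Real.exp (-x ^ 2 / 2))
    ((integrable_gauss1.const_mul _).restrict) (Fmeas hw) ?_
  refine (ae_restrict_iff' measurableSet_Ici).2 (Filter.Eventually.of_forall fun x hx => ?_)
  have := inner_bound hw hB (mem_Ici.1 hx)
  calc ‖∫ y in Ici (0:ℝ), w x y * gau x y‖ = |∫ y in Ici (0:ℝ), w x y * gau x y| := rfl
    _ ≤ B * Kint * Real.exp (-x ^ 2 / 2) := this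
    _ = (B * Kint) * Real.exp (-x ^ 2 / 2) := by ring

end gadget

lemma double_mono {w₁ w₂ : ℝ → ℝ → ℝ} {B₁ B₂ : ℝ}
    (hw₁ : Continuous fun q : ℝ × ℝ => w₁ q.1 q.2)
    (hw₂ : Continuous fun q : ℝ × ℝ => w₂ q.1 q.2)
    (hB₁ : ∀ x y, |w₁ x y| ≤ B₁) (hB₂ : ∀ x y, |w₂ x y| ≤ B₂)
    (hle : ∀ x ∈ Ici (0:ℝ), ∀ y ∈ Ici (0:ℝ), w₁ x y ≤ w₂ x y) :
    (∫ x in Ici (0:ℝ), ∫ y in Ici (0:ℝ), w₁ x y * gau x y)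
      ≤ ∫ x in Ici (0:ℝ), ∫ y in Ici (0:ℝ), w₂ x y * gau x y := by
  refine setIntegral_mono_on (outer_integrable hw₁ hB₁) (outer_integrable hw₂ hB₂)
    measurableSet_Ici fun x hx => ?_
  refine setIntegral_mono_on (inner_integrable hw₁ hB₁ (mem_Ici.1 hx))
    (inner_integrable hw₂ hB₂ (mem_Ici.1 hx)) measurableSet_Ici fun y hy => ?_
  exact mul_le_mul_of_nonneg_right (hle x hx y hy) (gau_pos x y).le

lemma double_nonneg {w : ℝ → ℝ → ℝ}
    (h : ∀ x ∈ Ici (0:ℝ), ∀ y ∈ Ici (0:ℝ), 0 ≤ w x y) :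
    0 ≤ ∫ x in Ici (0:ℝ), ∫ y in Ici (0:ℝ), w x y * gau x y := by
  refine setIntegral_nonneg measurableSet_Ici fun x hx => ?_
  exact setIntegral_nonneg measurableSet_Ici fun y hy =>
    mul_nonneg (h x hx y hy) (gau_pos x y).le

lemma double_const (c : ℝ) :
    (∫ x in Ici (0:ℝ), ∫ y in Ici (0:ℝ), c * gau x y) = c * Pint := by
  rw [Pint, ← integral_const_mul]
  exact setIntegral_congr_fun measurableSet_Ici fun x _ => integral_const_mul c _
-- J facts
lemma wJ_cont {j : ℕ} {θ : ℝ} (hθ : -1 < θ) :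
    Continuous fun q : ℝ × ℝ => ((θ + Eex q.1 q.2) ^ j)⁻¹ := by
  have h : ∀ q : ℝ × ℝ, (θ + Eex q.1 q.2) ^ j ≠ 0 := fun q =>
    pow_ne_zero _ (ne_of_gt (by have := one_le_Eex q.1 q.2; linarith))
  exact ((continuous_const.add Eex_cont).pow j).inv₀ h

lemma wJ_bound {j : ℕ} {θ : ℝ} (hθ : -1 < θ) (x y : ℝ) :
    |((θ + Eex x y) ^ j)⁻¹| ≤ ((1 + θ) ^ j)⁻¹ := by
  have h1 : (0:ℝ) < 1 + θ := by linarith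
  have h2 : 1 + θ ≤ θ + Eex x y := by have := one_le_Eex x y; linarith
  rw [abs_of_nonneg (inv_nonneg.2 (pow_nonneg (by linarith) j))]
  exact inv_anti₀ (pow_pos h1 j) (pow_le_pow_left₀ h1.le h2 j)

lemma J_nonneg (j : ℕ) {θ : ℝ} (hθ : -1 < θ) : 0 ≤ Jint j θ := by
  refine double_nonneg fun x _ y _ => ?_
  have := one_le_Eex x y
  exact inv_nonneg.2 (pow_nonneg (by linarith) _)

lemma J_le_J0 (j : ℕ) {θ : ℝ} (hθ : 0 ≤ θ) : Jint j θ ≤ Jint j 0 := by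
  refine double_mono (wJ_cont (by linarith)) (wJ_cont (by norm_num))
    (wJ_bound (by linarith)) (wJ_bound (by norm_num)) fun x _ y _ => ?_
  have hE := one_le_Eex x y
  exact inv_anti₀ (pow_pos (by linarith) j)
    (pow_le_pow_left₀ (by linarith) (by linarith) j)

lemma J0_le_Jneg (j : ℕ) {θ : ℝ} (hθ : 0 ≤ θ) (hθ' : θ < 1) : Jint j 0 ≤ Jint j (-θ) := by
  refine double_mono (wJ_cont (by norm_num)) (wJ_cont (by linarith))
    (wJ_bound (by norm_num)) (wJ_bound (by linarith)) fun x _ y _ => ?_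
  have hE := one_le_Eex x y
  exact inv_anti₀ (pow_pos (by linarith) j)
    (pow_le_pow_left₀ (by linarith) (by linarith) j)

lemma J_le_P (j : ℕ) {θ : ℝ} (hθ : -1 < θ) : Jint j θ ≤ ((1 + θ) ^ j)⁻¹ * Pint := by
  have h1 : (0:ℝ) < 1 + θ := by linarith
  rw [Jint, ← double_const]
  refine double_mono (wJ_cont hθ) continuous_const (wJ_bound hθ)
    (fun x y => le_of_eq (abs_of_nonneg (by positivity))) fun x _ y _ => ?_
  have hE := one_le_Eex x y
  exact inv_anti₀ (pow_pos h1 j) (pow_le_pow_left₀ h1.le (by linarith) j)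

lemma J0_le_P (j : ℕ) : Jint j 0 ≤ Pint := by
  have := J_le_P j (show (-1:ℝ) < 0 by norm_num)
  simpa using this

-- P facts
lemma gau_integrableOn_y {x : ℝ} (hx : 0 ≤ x) : IntegrableOn (fun y => gau x y) (Ici 0) := by
  have := inner_integrable (w := fun _ _ => (1:ℝ)) (B := 1) continuous_const
    (by intro x y; simp) hx
  simpa using this

lemma gauF_integrableOn : IntegrableOn (fun x => ∫ y in Ici (0:ℝ), gau x y) (Ici 0) := by
  have := outer_integrable (w := fun _ _ => (1:ℝ)) (B := 1) continuous_const
    (by intro x y; simp)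
  simp only [one_mul] at this
  exact this

lemma P_pos : 0 < Pint := by
  have hexp : (0:ℝ) < Real.exp (-2) := Real.exp_pos _
  have hF : ∀ x ∈ Icc (0:ℝ) 1, Real.exp (-2) ≤ ∫ y in Ici (0:ℝ), gau x y := by
    intro x hx
    have hcg : Continuous fun y => gau x y := gau_cont.curry_right
    have h1 : ∫ y in Icc (0:ℝ) 1, Real.exp (-2) ≤ ∫ y in Icc (0:ℝ) 1, gau x y := by
      refine setIntegral_mono_on (integrableOn_const (by simp [Real.volume_Icc]) (by simp))
        (hcg.integrableOn_Icc) measurableSet_Icc fun y hy => ?_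
      rw [gau]
      exact Real.exp_le_exp.2 (by nlinarith [hx.1, hx.2, hy.1, hy.2])
    have h2 : ∫ y in Icc (0:ℝ) 1, gau x y ≤ ∫ y in Ici (0:ℝ), gau x y := by
      refine setIntegral_mono_set (gau_integrableOn_y hx.1)
        (Filter.Eventually.of_forall fun y => (gau_pos x y).le)
        (HasSubset.Subset.eventuallyLE (Icc_subset_Ici_self))
    have h3 : ∫ y in Icc (0:ℝ) 1, Real.exp (-2) = Real.exp (-2) := by
      simp [Real.volume_Icc]
    linarith
  have h4 : ∫ x in Icc (0:ℝ) 1, Real.exp (-2) ≤ ∫ x in Icc (0:ℝ) 1, ∫ y in Ici (0:ℝ), gau x y := by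
    refine setIntegral_mono_on (integrableOn_const (by simp [Real.volume_Icc]) (by simp))
      (gauF_integrableOn.mono_set Icc_subset_Ici_self) measurableSet_Icc hF
  have h5 : ∫ x in Icc (0:ℝ) 1, (∫ y in Ici (0:ℝ), gau x y) ≤ Pint := by
    refine setIntegral_mono_set gauF_integrableOn
      (Filter.Eventually.of_forall fun x =>
        setIntegral_nonneg measurableSet_Ici fun y _ => (gau_pos x y).le)
      (HasSubset.Subset.eventuallyLE (Icc_subset_Ici_self))
  have h6 : ∫ x in Icc (0:ℝ) 1, Real.exp (-2) = Real.exp (-2) := by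
    simp [Real.volume_Icc]
  linarith
-- pointwise identities
lemma sqrt2pi_ne : Real.sqrt (2 * π) ≠ 0 :=
  ne_of_gt (Real.sqrt_pos.2 (by positivity))

lemma alg2 {a c s t d : ℝ} (ha : a ≠ 0) (j : ℕ) :
    (d / a) ^ (j + 1) * (s * (a * t)) * c = d ^ (j + 1) * c * s * ((a ^ j)⁻¹ * t) := by
  rw [div_pow, pow_succ a j]
  field_simp

lemma ptPP (j : ℕ) {θ x y : ℝ} (hθ : -1 < θ) (hx : 0 ≤ x) (hy : 0 < y) :
    k θ x y ^ (j + 1) * p θ x y * μinv θ x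
      = ((1 + θ) * (Real.sqrt (2 * π))⁻¹) * (((θ + Eex x y) ^ j)⁻¹ * gau x y) := by
  have hxy : 0 ≤ x * y := mul_nonneg hx hy.le
  have hE1 : 1 ≤ Real.exp (2 * max 0 (x * y)) := by
    rw [← Real.exp_zero]; exact Real.exp_le_exp.2 (by positivity)
  have hEpos : 0 < θ + Real.exp (2 * max 0 (x * y)) := by linarith
  have hsplit : Real.exp (-(x - y) ^ 2 / 2)
      = Real.exp (2 * max 0 (x * y)) * Real.exp (-(x + y) ^ 2 / 2) := by
    rw [← Real.exp_add]; congr 1; rw [max_eq_right hxy]; ring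
  rw [k, p, μinv, Eex, gau, Real.sign_of_pos hy, if_pos ⟨hx, hy.le⟩, if_pos hx, hsplit]
  have e0 : (1:ℝ) * θ + Real.exp (2 * max 0 (x * y)) = θ + Real.exp (2 * max 0 (x * y)) := by ring
  have e1 : (Real.sqrt (2 * π))⁻¹ * (Real.exp (2 * max 0 (x * y)) * Real.exp (-(x + y) ^ 2 / 2)
        + θ * Real.exp (-(x + y) ^ 2 / 2))
      = (Real.sqrt (2 * π))⁻¹ * ((θ + Real.exp (2 * max 0 (x * y))) * Real.exp (-(x + y) ^ 2 / 2)) := by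
    ring
  rw [e0, e1, alg2 (ne_of_gt hEpos) j]
  ring

lemma ptMM (j : ℕ) {θ x y : ℝ} (hθ : θ < 1) (hx : x < 0) (hy : y < 0) :
    k θ x y ^ (j + 1) * p θ x y * μinv θ x
      = ((-1) ^ (j + 1) * (1 - θ) * (Real.sqrt (2 * π))⁻¹)
          * (((-θ + Eex x y) ^ j)⁻¹ * gau x y) := by
  have hxy : 0 ≤ x * y := (mul_pos_of_neg_of_neg hx hy).le
  have hE1 : 1 ≤ Real.exp (2 * max 0 (x * y)) := by
    rw [← Real.exp_zero]; exact Real.exp_le_exp.2 (by positivity)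
  have hEpos : 0 < -θ + Real.exp (2 * max 0 (x * y)) := by linarith
  have hsplit : Real.exp (-(x - y) ^ 2 / 2)
      = Real.exp (2 * max 0 (x * y)) * Real.exp (-(x + y) ^ 2 / 2) := by
    rw [← Real.exp_add]; congr 1; rw [max_eq_right hxy]; ring
  rw [k, p, μinv, Eex, gau, Real.sign_of_neg hy,
    if_neg (fun h => absurd h.2 hy.not_ge), if_pos ⟨hx.le, hy.le⟩, if_neg hx.not_ge, hsplit]
  have e0 : (-1:ℝ) * θ + Real.exp (2 * max 0 (x * y)) = -θ + Real.exp (2 * max 0 (x * y)) := by ring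
  have e1 : (Real.sqrt (2 * π))⁻¹ * (Real.exp (2 * max 0 (x * y)) * Real.exp (-(x + y) ^ 2 / 2)
        - θ * Real.exp (-(x + y) ^ 2 / 2))
      = (Real.sqrt (2 * π))⁻¹ * ((-θ + Real.exp (2 * max 0 (x * y))) * Real.exp (-(x + y) ^ 2 / 2)) := by
    ring
  rw [e0, e1, alg2 (ne_of_gt hEpos) j]

lemma ptPM (j : ℕ) {θ x y : ℝ} (hθ : -1 < θ) (hθ' : θ < 1) (hx : 0 < x) (hy : y < 0) :
    k θ x y ^ (j + 1) * p θ x y * μinv θ x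
      = ((-1) ^ (j + 1) * (1 + θ) * ((1 - θ) ^ j)⁻¹ * (Real.sqrt (2 * π))⁻¹)
          * Real.exp (-(x - y) ^ 2 / 2) := by
  have hxy : x * y ≤ 0 := le_of_lt (mul_neg_of_pos_of_neg hx hy)
  have hmax : max 0 (x * y) = 0 := max_eq_left hxy
  rw [k, p, μinv, Real.sign_of_neg hy, hmax,
    if_neg (fun h => absurd h.2 hy.not_ge), if_neg (fun h => absurd h.1 hx.not_ge),
    if_pos hx.le, if_pos hx.le]
  rw [mul_zero, Real.exp_zero]
  have e0 : (-1:ℝ) * θ + 1 = 1 - θ := by ring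
  have hne2 : (1 - θ) ≠ 0 := by intro h; nlinarith
  rw [e0, alg2 hne2 j]
  ring

lemma ptMP (j : ℕ) {θ x y : ℝ} (hθ : -1 < θ) (hθ' : θ < 1) (hx : x < 0) (hy : 0 < y) :
    k θ x y ^ (j + 1) * p θ x y * μinv θ x
      = ((1 - θ) * ((1 + θ) ^ j)⁻¹ * (Real.sqrt (2 * π))⁻¹)
          * Real.exp (-(x - y) ^ 2 / 2) := by
  have hxy : x * y ≤ 0 := le_of_lt (mul_neg_of_neg_of_pos hx hy)
  have hmax : max 0 (x * y) = 0 := max_eq_left hxy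
  rw [k, p, μinv, Real.sign_of_pos hy, hmax,
    if_neg (fun h => absurd h.1 hx.not_ge), if_neg (fun h => absurd h.2 hy.not_ge),
    if_neg hx.not_ge, if_neg hx.not_ge]
  rw [mul_zero, Real.exp_zero]
  have e0 : (1:ℝ) * θ + 1 = 1 + θ := by ring
  have hne2 : (1 + θ) ≠ 0 := by intro h; nlinarith
  rw [e0, alg2 hne2 j]
  ring

-- a.e. facts and substitutions
lemma ae_ne_zero : ∀ᵐ y : ℝ, y ≠ 0 := by
  rw [ae_iff]
  have h : {y : ℝ | ¬ y ≠ 0} = {0} := by ext t; simp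
  rw [h]
  exact Real.volume_singleton

lemma iic_to_ici (g : ℝ → ℝ) : (∫ t in Iic (0:ℝ), g t) = ∫ t in Ici (0:ℝ), g (-t) := by
  have h := integral_comp_neg_Iic (0:ℝ) (fun t => g (-t))
  simp only [neg_neg, neg_zero] at h
  rw [integral_Ici_eq_integral_Ioi, ← h]

-- quadrant identities
lemma chiPP_eq (j : ℕ) {θ : ℝ} (hθ : -1 < θ) :
    chiPP (j + 1) θ = ((1 + θ) * (Real.sqrt (2 * π))⁻¹) * Jint j θ := by
  rw [chiPP, Jint, ← integral_const_mul]
  refine setIntegral_congr_fun measurableSet_Ici fun x hx => ?_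
  rw [← integral_const_mul]
  refine setIntegral_congr_ae measurableSet_Ici ?_
  filter_upwards [ae_ne_zero] with y hy0 hy
  exact ptPP j hθ hx (lt_of_le_of_ne hy (Ne.symm hy0))

lemma chiMM_eq (j : ℕ) {θ : ℝ} (hθ : θ < 1) :
    chiMM (j + 1) θ = ((-1) ^ (j + 1) * (1 - θ) * (Real.sqrt (2 * π))⁻¹) * Jint j (-θ) := by
  have h1 : ∀ᵐ x : ℝ, x ∈ Iic (0:ℝ) →
      (∫ y in Iic (0:ℝ), k θ x y ^ (j + 1) * p θ x y * μinv θ x)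
      = (-1) ^ (j + 1) * (1 - θ) * (Real.sqrt (2 * π))⁻¹
          * ∫ y in Iic (0:ℝ), ((-θ + Eex x y) ^ j)⁻¹ * gau x y := by
    filter_upwards [ae_ne_zero] with x hx0 hx
    rw [← integral_const_mul]
    refine setIntegral_congr_ae measurableSet_Iic ?_
    filter_upwards [ae_ne_zero] with y hy0 hy
    exact ptMM j hθ (lt_of_le_of_ne hx hx0) (lt_of_le_of_ne hy hy0)
  rw [chiMM, setIntegral_congr_ae measurableSet_Iic h1, integral_const_mul]
  congr 1
  rw [Jint, iic_to_ici]
  refine setIntegral_congr_fun measurableSet_Ici fun x _ => ?_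
  rw [iic_to_ici]
  refine setIntegral_congr_fun measurableSet_Ici fun y _ => ?_
  have h2 : -x * -y = x * y := by ring
  have h3 : (-x + -y) ^ 2 = (x + y) ^ 2 := by ring
  simp only [Eex, gau]
  rw [h2, h3]

lemma chiPM_eq (j : ℕ) {θ : ℝ} (hθ : -1 < θ) (hθ' : θ < 1) :
    chiPM (j + 1) θ
      = ((-1) ^ (j + 1) * (1 + θ) * ((1 - θ) ^ j)⁻¹ * (Real.sqrt (2 * π))⁻¹) * Pint := by
  have h1 : ∀ᵐ x : ℝ, x ∈ Ici (0:ℝ) →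
      (∫ y in Iic (0:ℝ), k θ x y ^ (j + 1) * p θ x y * μinv θ x)
      = (-1) ^ (j + 1) * (1 + θ) * ((1 - θ) ^ j)⁻¹ * (Real.sqrt (2 * π))⁻¹
          * ∫ y in Ici (0:ℝ), gau x y := by
    filter_upwards [ae_ne_zero] with x hx0 hx
    rw [← integral_const_mul]
    rw [show (∫ y in Ici (0:ℝ), (-1:ℝ) ^ (j + 1) * (1 + θ) * ((1 - θ) ^ j)⁻¹
        * (Real.sqrt (2 * π))⁻¹ * gau x y)
      = ∫ y in Iic (0:ℝ), (-1:ℝ) ^ (j + 1) * (1 + θ) * ((1 - θ) ^ j)⁻¹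
        * (Real.sqrt (2 * π))⁻¹ * gau x (-y) from by rw [iic_to_ici]; simp only [neg_neg]]
    refine setIntegral_congr_ae measurableSet_Iic ?_
    filter_upwards [ae_ne_zero] with y hy0 hy
    have := ptPM j hθ hθ' (lt_of_le_of_ne (mem_Ici.1 hx) (Ne.symm hx0)) (lt_of_le_of_ne hy hy0)
    rw [this, gau]
    congr 2
    try ring
  rw [chiPM, setIntegral_congr_ae measurableSet_Ici h1, integral_const_mul, Pint]

lemma chiMP_eq (j : ℕ) {θ : ℝ} (hθ : -1 < θ) (hθ' : θ < 1) :
    chiMP (j + 1) θ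
      = ((1 - θ) * ((1 + θ) ^ j)⁻¹ * (Real.sqrt (2 * π))⁻¹) * Pint := by
  have h1 : ∀ᵐ x : ℝ, x ∈ Iic (0:ℝ) →
      (∫ y in Ici (0:ℝ), k θ x y ^ (j + 1) * p θ x y * μinv θ x)
      = (1 - θ) * ((1 + θ) ^ j)⁻¹ * (Real.sqrt (2 * π))⁻¹
          * ∫ y in Ici (0:ℝ), gau (-x) y := by
    filter_upwards [ae_ne_zero] with x hx0 hx
    rw [← integral_const_mul]
    refine setIntegral_congr_ae measurableSet_Ici ?_
    filter_upwards [ae_ne_zero] with y hy0 hy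
    have := ptMP j hθ hθ' (lt_of_le_of_ne hx hx0) (lt_of_le_of_ne (mem_Ici.1 hy) (Ne.symm hy0))
    rw [this, gau]
    congr 2
    try ring
  rw [chiMP, setIntegral_congr_ae measurableSet_Iic h1, integral_const_mul]
  congr 1
  rw [Pint, iic_to_ici (fun x => ∫ y in Ici (0:ℝ), gau (-x) y)]
  simp only [neg_neg]

lemma chi_eq (j : ℕ) {θ : ℝ} (hθ : -1 < θ) (hθ' : θ < 1) :
    chi (j + 1) θ
      = ((1 + θ) * Jint j θ + (-1) ^ (j + 1) * (1 - θ) * Jint j (-θ)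
          + (-1) ^ (j + 1) * (1 + θ) * ((1 - θ) ^ j)⁻¹ * Pint
          + (1 - θ) * ((1 + θ) ^ j)⁻¹ * Pint) * (Real.sqrt (2 * π))⁻¹ := by
  rw [chi, chiPP_eq j hθ, chiMM_eq j hθ', chiPM_eq j hθ hθ', chiMP_eq j hθ hθ']
  ring
lemma key_ineq (j : ℕ) {θ : ℝ} (h0 : 0 ≤ θ) (h1 : θ < 1) :
    ((j:ℝ) + 2) * θ ≤ (1 + θ) * ((1 - θ) ^ j)⁻¹ - (1 - θ) * ((1 + θ) ^ j)⁻¹ := by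
  have ha : (0:ℝ) < 1 - θ := by linarith
  have hb : (0:ℝ) < 1 + θ := by linarith
  have hBern : 1 + (j:ℝ) * θ ≤ ((1 - θ) ^ j)⁻¹ := by
    have h2 : (-2:ℝ) ≤ θ / (1 - θ) := le_trans (by norm_num) (div_nonneg h0 ha.le)
    have h3 := one_add_mul_le_pow h2 j
    have h4 : (1 + θ / (1 - θ)) = (1 - θ)⁻¹ := by field_simp; ring
    have h7 : 1 + (j:ℝ) * θ ≤ 1 + (j:ℝ) * (θ / (1 - θ)) := by
      have hj : (0:ℝ) ≤ (j:ℝ) := Nat.cast_nonneg j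
      have h5 : θ ≤ θ / (1 - θ) := by rw [le_div_iff₀ ha]; nlinarith
      nlinarith
    calc 1 + (j:ℝ) * θ ≤ 1 + (j:ℝ) * (θ / (1 - θ)) := h7
      _ ≤ (1 + θ / (1 - θ)) ^ j := h3
      _ = ((1 - θ) ^ j)⁻¹ := by rw [h4, inv_pow]
  have hup : ((1 + θ) ^ j)⁻¹ ≤ 1 := by
    have h7 : (1:ℝ) ≤ (1 + θ) ^ j := one_le_pow₀ (by linarith)
    calc ((1 + θ) ^ j)⁻¹ ≤ (1:ℝ)⁻¹ := inv_anti₀ one_pos h7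
      _ = 1 := inv_one
  have hlow : (1 + θ) * (1 + (j:ℝ) * θ) ≤ (1 + θ) * ((1 - θ) ^ j)⁻¹ :=
    mul_le_mul_of_nonneg_left hBern hb.le
  have hup2 : (1 - θ) * ((1 + θ) ^ j)⁻¹ ≤ (1 - θ) * 1 := mul_le_mul_of_nonneg_left hup ha.le
  nlinarith [mul_nonneg (Nat.cast_nonneg j : (0:ℝ) ≤ (j:ℝ)) (sq_nonneg θ)]

set_option maxHeartbeats 1000000 in
theorem xi_bounds (m : ℕ) (hm : 1 ≤ m) :
    (∃ c : ℝ, 0 < c ∧ ∀ θ ∈ Set.Ioo (0 : ℝ) 1,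
        -c ≤ (1 - θ ^ 2) ^ (2 * m) * xi (2 * m) θ ∧
        (1 - θ ^ 2) ^ (2 * m) * xi (2 * m) θ < 0) ∧
    (∃ c₁ c₂ : ℝ, 0 < c₁ ∧ 0 < c₂ ∧ ∀ θ ∈ Set.Ioo (-1 : ℝ) 1,
        -c₁ ≤ (1 - θ ^ 2) ^ (2 * m + 1) * xi (2 * m + 1) θ ∧
        (1 - θ ^ 2) ^ (2 * m + 1) * xi (2 * m + 1) θ ≤ -c₂) := by
  have hsq : (0:ℝ) < Real.sqrt (2 * π) := Real.sqrt_pos.2 (by positivity)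
  have hs : (0:ℝ) < (Real.sqrt (2 * π))⁻¹ := inv_pos.2 hsq
  have hP := P_pos
  constructor
  · -- even case
    have hfac : (0:ℝ) < ((2 * m).factorial : ℝ) := Nat.cast_pos.2 (Nat.factorial_pos _)
    refine ⟨((2 * m).factorial : ℝ) * (2 * 2 ^ (2 * m) * Pint) * (Real.sqrt (2 * π))⁻¹,
      mul_pos (mul_pos hfac (by positivity)) hs, fun θ hθ => ?_⟩
    obtain ⟨hθ0, hθ1⟩ := hθ
    have hθm : (-1:ℝ) < θ := by linarith
    have hJP := J_nonneg (2 * m) hθm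
    have hJ2 := J_le_J0 (2 * m) hθ0.le
    have hJ3 := J0_le_Jneg (2 * m) hθ0.le hθ1
    have hJ4 : Jint (2 * m) (-θ) ≤ ((1 - θ) ^ (2 * m))⁻¹ * Pint := by
      have h := J_le_P (2 * m) (show (-1:ℝ) < -θ by linarith)
      rw [show (1 + -θ) = 1 - θ by ring] at h
      exact h
    have hJ5 := J0_le_P (2 * m)
    have hkey := key_ineq (2 * m) hθ0.le hθ1
    have hchi := chi_eq (2 * m) hθm hθ1
    rw [show ((-1:ℝ) ^ (2 * m + 1)) = -1 from Odd.neg_one_pow ⟨m, by ring⟩] at hchi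
    have hxi : xi (2 * m) θ = ((2 * m).factorial : ℝ) * chi (2 * m + 1) θ := by
      rw [xi, Even.neg_one_pow ⟨m, by ring⟩, mul_one]
    have f0 : (0:ℝ) < 1 - θ := by linarith
    have f2 : (0:ℝ) < 1 + θ := by linarith
    have f1 : (0:ℝ) < (1 - θ) ^ (2 * m) := pow_pos f0 _
    have fq : (0:ℝ) < 1 - θ ^ 2 := by nlinarith
    have hqpos : (0:ℝ) < (1 - θ ^ 2) ^ (2 * m) := pow_pos fq _
    have e1 : (1 + θ) * Jint (2 * m) θ ≤ (1 + θ) * Jint (2 * m) 0 :=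
      mul_le_mul_of_nonneg_left hJ2 f2.le
    have e2 : (1 - θ) * Jint (2 * m) 0 ≤ (1 - θ) * Jint (2 * m) (-θ) :=
      mul_le_mul_of_nonneg_left hJ3 f0.le
    have e3 : (2 * θ) * Jint (2 * m) 0 ≤ (2 * θ) * Pint :=
      mul_le_mul_of_nonneg_left hJ5 (by linarith)
    have e4 : (((2 * m : ℕ):ℝ) + 2) * θ * Pint
        ≤ ((1 + θ) * ((1 - θ) ^ (2 * m))⁻¹ - (1 - θ) * ((1 + θ) ^ (2 * m))⁻¹) * Pint :=
      mul_le_mul_of_nonneg_right hkey hP.le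
    have hmcast : (1:ℝ) ≤ (m:ℝ) := by exact_mod_cast hm
    have hcast : ((2 * m : ℕ):ℝ) = 2 * (m:ℝ) := by push_cast; ring
    rw [hcast] at e4
    have hbr_up : (1 + θ) * Jint (2 * m) θ + -1 * (1 - θ) * Jint (2 * m) (-θ)
        + -1 * (1 + θ) * ((1 - θ) ^ (2 * m))⁻¹ * Pint
        + (1 - θ) * ((1 + θ) ^ (2 * m))⁻¹ * Pint
        ≤ -(2 * (m:ℝ) * θ * Pint) := by
      ring_nf at e1 e2 e3 e4 ⊢
      linarith
    have hpos2 : (0:ℝ) < 2 * (m:ℝ) * θ * Pint :=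
      mul_pos (mul_pos (by linarith) hθ0) hP
    have hbrneg : (1 + θ) * Jint (2 * m) θ + -1 * (1 - θ) * Jint (2 * m) (-θ)
        + -1 * (1 + θ) * ((1 - θ) ^ (2 * m))⁻¹ * Pint
        + (1 - θ) * ((1 + θ) ^ (2 * m))⁻¹ * Pint < 0 := by linarith
    have hchi_neg : chi (2 * m + 1) θ < 0 := by
      rw [hchi]
      exact mul_neg_of_neg_of_pos hbrneg hs
    constructor
    · have g1 : (1 - θ) * Jint (2 * m) (-θ) ≤ (1 - θ) * (((1 - θ) ^ (2 * m))⁻¹ * Pint) :=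
        mul_le_mul_of_nonneg_left hJ4 f0.le
      have g2 : (0:ℝ) ≤ (1 - θ) * ((1 + θ) ^ (2 * m))⁻¹ * Pint := by positivity
      have g3 : (0:ℝ) ≤ (1 + θ) * Jint (2 * m) θ := mul_nonneg f2.le hJP
      have hbr_low : -(2 * (((1 - θ) ^ (2 * m))⁻¹ * Pint))
          ≤ (1 + θ) * Jint (2 * m) θ + -1 * (1 - θ) * Jint (2 * m) (-θ)
            + -1 * (1 + θ) * ((1 - θ) ^ (2 * m))⁻¹ * Pint
            + (1 - θ) * ((1 + θ) ^ (2 * m))⁻¹ * Pint := by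
        ring_nf at g1 g2 g3 ⊢
        linarith
      have hpow : (1 - θ ^ 2) ^ (2 * m) * ((1 - θ) ^ (2 * m))⁻¹ = (1 + θ) ^ (2 * m) := by
        rw [show (1 - θ ^ 2) = (1 - θ) * (1 + θ) by ring, mul_pow]
        field_simp
      have h2m : (1 + θ) ^ (2 * m) ≤ 2 ^ (2 * m) := pow_le_pow_left₀ f2.le (by linarith) _
      have hstep : -(2 * 2 ^ (2 * m) * Pint) ≤ (1 - θ ^ 2) ^ (2 * m)
          * ((1 + θ) * Jint (2 * m) θ + -1 * (1 - θ) * Jint (2 * m) (-θ)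
            + -1 * (1 + θ) * ((1 - θ) ^ (2 * m))⁻¹ * Pint
            + (1 - θ) * ((1 + θ) ^ (2 * m))⁻¹ * Pint) := by
        calc -(2 * 2 ^ (2 * m) * Pint) ≤ -(2 * (1 + θ) ^ (2 * m) * Pint) := by nlinarith
          _ = (1 - θ ^ 2) ^ (2 * m) * (-(2 * (((1 - θ) ^ (2 * m))⁻¹ * Pint))) := by
              linear_combination (2 * Pint) * hpow
          _ ≤ _ := mul_le_mul_of_nonneg_left hbr_low hqpos.le
      have hfinal : (1 - θ ^ 2) ^ (2 * m) * xi (2 * m) θ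
          = ((2 * m).factorial : ℝ) * (Real.sqrt (2 * π))⁻¹
            * ((1 - θ ^ 2) ^ (2 * m)
              * ((1 + θ) * Jint (2 * m) θ + -1 * (1 - θ) * Jint (2 * m) (-θ)
                + -1 * (1 + θ) * ((1 - θ) ^ (2 * m))⁻¹ * Pint
                + (1 - θ) * ((1 + θ) ^ (2 * m))⁻¹ * Pint)) := by
        rw [hxi, hchi]; ring
      rw [hfinal]
      have hFs : (0:ℝ) ≤ ((2 * m).factorial : ℝ) * (Real.sqrt (2 * π))⁻¹ := by positivity
      calc -(((2 * m).factorial : ℝ) * (2 * 2 ^ (2 * m) * Pint) * (Real.sqrt (2 * π))⁻¹)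
          = ((2 * m).factorial : ℝ) * (Real.sqrt (2 * π))⁻¹ * (-(2 * 2 ^ (2 * m) * Pint)) := by
            ring
        _ ≤ _ := by
            have := mul_le_mul_of_nonneg_left hstep hFs
            linarith
    · have hxin : xi (2 * m) θ < 0 := by
        rw [hxi]; exact mul_neg_of_pos_of_neg hfac hchi_neg
      exact mul_neg_of_pos_of_neg hqpos hxin
  · -- odd case
    have hfac : (0:ℝ) < ((2 * m + 1).factorial : ℝ) := Nat.cast_pos.2 (Nat.factorial_pos _)
    refine ⟨((2 * m + 1).factorial : ℝ) * (2 ^ (2 * m + 1) * (2 * Pint) * 4) * (Real.sqrt (2 * π))⁻¹,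
      ((2 * m + 1).factorial : ℝ) * Pint * (Real.sqrt (2 * π))⁻¹,
      mul_pos (mul_pos hfac (by positivity)) hs,
      mul_pos (mul_pos hfac hP) hs, fun θ hθ => ?_⟩
    obtain ⟨hθ0, hθ1⟩ := hθ
    have hθm : (-1:ℝ) < θ := hθ0
    have f0 : (0:ℝ) < 1 - θ := by linarith
    have f2 : (0:ℝ) < 1 + θ := by linarith
    have fq : (0:ℝ) < 1 - θ ^ 2 := by nlinarith
    have hqpos : (0:ℝ) < (1 - θ ^ 2) ^ (2 * m + 1) := pow_pos fq _
    have hJP0 := J_nonneg (2 * m + 1) hθm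
    have hJM0 := J_nonneg (2 * m + 1) (show (-1:ℝ) < -θ by linarith)
    have hJPbd := J_le_P (2 * m + 1) hθm
    have hJMbd : Jint (2 * m + 1) (-θ) ≤ ((1 - θ) ^ (2 * m + 1))⁻¹ * Pint := by
      have h := J_le_P (2 * m + 1) (show (-1:ℝ) < -θ by linarith)
      rw [show (1 + -θ) = 1 - θ by ring] at h
      exact h
    have hchi := chi_eq (2 * m + 1) hθm hθ1
    rw [show ((-1:ℝ) ^ (2 * m + 1 + 1)) = 1 from Even.neg_one_pow ⟨m + 1, by ring⟩] at hchi
    have hxi : xi (2 * m + 1) θ = -(((2 * m + 1).factorial : ℝ) * chi (2 * m + 1 + 1) θ) := by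
      rw [xi, show ((-1:ℝ) ^ (2 * m + 1)) = -1 from Odd.neg_one_pow ⟨m, by ring⟩]; ring
    have hpow1 : (1 - θ ^ 2) ^ (2 * m + 1) * ((1 - θ) ^ (2 * m + 1))⁻¹
        = (1 + θ) ^ (2 * m + 1) := by
      rw [show (1 - θ ^ 2) = (1 - θ) * (1 + θ) by ring, mul_pow]
      field_simp
    have hpow2 : (1 - θ ^ 2) ^ (2 * m + 1) * ((1 + θ) ^ (2 * m + 1))⁻¹
        = (1 - θ) ^ (2 * m + 1) := by
      rw [show (1 - θ ^ 2) = (1 - θ) * (1 + θ) by ring, mul_pow]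
      field_simp
    have l3 : (1 - θ ^ 2) ^ (2 * m + 1) * (1 * (1 + θ) * ((1 - θ) ^ (2 * m + 1))⁻¹ * Pint)
        = (1 + θ) ^ (2 * m + 1 + 1) * Pint := by
      calc (1 - θ ^ 2) ^ (2 * m + 1) * (1 * (1 + θ) * ((1 - θ) ^ (2 * m + 1))⁻¹ * Pint)
          = ((1 - θ ^ 2) ^ (2 * m + 1) * ((1 - θ) ^ (2 * m + 1))⁻¹) * ((1 + θ) * Pint) := by ring
        _ = (1 + θ) ^ (2 * m + 1) * ((1 + θ) * Pint) := by rw [hpow1]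
        _ = (1 + θ) ^ (2 * m + 1 + 1) * Pint := by rw [pow_succ]; ring
    have l4 : (1 - θ ^ 2) ^ (2 * m + 1) * ((1 - θ) * ((1 + θ) ^ (2 * m + 1))⁻¹ * Pint)
        = (1 - θ) ^ (2 * m + 1 + 1) * Pint := by
      calc (1 - θ ^ 2) ^ (2 * m + 1) * ((1 - θ) * ((1 + θ) ^ (2 * m + 1))⁻¹ * Pint)
          = ((1 - θ ^ 2) ^ (2 * m + 1) * ((1 + θ) ^ (2 * m + 1))⁻¹) * ((1 - θ) * Pint) := by ring
        _ = (1 - θ) ^ (2 * m + 1) * ((1 - θ) * Pint) := by rw [hpow2]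
        _ = (1 - θ) ^ (2 * m + 1 + 1) * Pint := by rw [pow_succ]; ring
    have hsum1 : (1:ℝ) * Pint
        ≤ ((1 + θ) ^ (2 * m + 1 + 1) + (1 - θ) ^ (2 * m + 1 + 1)) * Pint := by
      refine mul_le_mul_of_nonneg_right ?_ hP.le
      rcases le_or_gt 0 θ with h | h
      · have b1 : (1:ℝ) ≤ (1 + θ) ^ (2 * m + 1 + 1) := one_le_pow₀ (by linarith)
        have b2 : (0:ℝ) ≤ (1 - θ) ^ (2 * m + 1 + 1) := by positivity
        linarith
      · have b1 : (1:ℝ) ≤ (1 - θ) ^ (2 * m + 1 + 1) := one_le_pow₀ (by linarith)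
        have b2 : (0:ℝ) ≤ (1 + θ) ^ (2 * m + 1 + 1) := by positivity
        linarith
    have l1 : (0:ℝ) ≤ (1 - θ ^ 2) ^ (2 * m + 1) * ((1 + θ) * Jint (2 * m + 1) θ) :=
      mul_nonneg hqpos.le (mul_nonneg f2.le hJP0)
    have l2 : (0:ℝ) ≤ (1 - θ ^ 2) ^ (2 * m + 1) * (1 * (1 - θ) * Jint (2 * m + 1) (-θ)) :=
      mul_nonneg hqpos.le (mul_nonneg (by linarith) hJM0)
    have hqbr_low : Pint ≤ (1 - θ ^ 2) ^ (2 * m + 1)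
        * ((1 + θ) * Jint (2 * m + 1) θ + 1 * (1 - θ) * Jint (2 * m + 1) (-θ)
          + 1 * (1 + θ) * ((1 - θ) ^ (2 * m + 1))⁻¹ * Pint
          + (1 - θ) * ((1 + θ) ^ (2 * m + 1))⁻¹ * Pint) := by
      ring_nf at l1 l2 l3 l4 hsum1 ⊢
      linarith
    -- upper bound
    have a1 : (1 - θ) ^ (2 * m + 1) ≤ 2 ^ (2 * m + 1) := pow_le_pow_left₀ f0.le (by linarith) _
    have a2 : (1 + θ) ^ (2 * m + 1) ≤ 2 ^ (2 * m + 1) := pow_le_pow_left₀ f2.le (by linarith) _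
    have u1 : (1 - θ ^ 2) ^ (2 * m + 1) * ((1 + θ) * Jint (2 * m + 1) θ)
        ≤ (1 - θ ^ 2) ^ (2 * m + 1) * ((1 + θ) * (((1 + θ) ^ (2 * m + 1))⁻¹ * Pint)) :=
      mul_le_mul_of_nonneg_left (mul_le_mul_of_nonneg_left hJPbd f2.le) hqpos.le
    have u1e : (1 - θ ^ 2) ^ (2 * m + 1) * ((1 + θ) * (((1 + θ) ^ (2 * m + 1))⁻¹ * Pint))
        = (1 - θ) ^ (2 * m + 1) * ((1 + θ) * Pint) := by
      calc (1 - θ ^ 2) ^ (2 * m + 1) * ((1 + θ) * (((1 + θ) ^ (2 * m + 1))⁻¹ * Pint))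
          = ((1 - θ ^ 2) ^ (2 * m + 1) * ((1 + θ) ^ (2 * m + 1))⁻¹) * ((1 + θ) * Pint) := by ring
        _ = (1 - θ) ^ (2 * m + 1) * ((1 + θ) * Pint) := by rw [hpow2]
    have w1 : (1 - θ) ^ (2 * m + 1) * ((1 + θ) * Pint) ≤ 2 ^ (2 * m + 1) * (2 * Pint) := by
      have b2 : (1 + θ) * Pint ≤ 2 * Pint := mul_le_mul_of_nonneg_right (by linarith) hP.le
      exact mul_le_mul a1 b2 (mul_nonneg f2.le hP.le) (by positivity)
    have u2 : (1 - θ ^ 2) ^ (2 * m + 1) * (1 * (1 - θ) * Jint (2 * m + 1) (-θ))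
        ≤ (1 - θ ^ 2) ^ (2 * m + 1) * (1 * (1 - θ) * (((1 - θ) ^ (2 * m + 1))⁻¹ * Pint)) := by
      refine mul_le_mul_of_nonneg_left ?_ hqpos.le
      refine mul_le_mul_of_nonneg_left hJMbd (by linarith)
    have u2e : (1 - θ ^ 2) ^ (2 * m + 1) * (1 * (1 - θ) * (((1 - θ) ^ (2 * m + 1))⁻¹ * Pint))
        = (1 + θ) ^ (2 * m + 1) * ((1 - θ) * Pint) := by
      calc (1 - θ ^ 2) ^ (2 * m + 1) * (1 * (1 - θ) * (((1 - θ) ^ (2 * m + 1))⁻¹ * Pint))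
          = ((1 - θ ^ 2) ^ (2 * m + 1) * ((1 - θ) ^ (2 * m + 1))⁻¹) * ((1 - θ) * Pint) := by ring
        _ = (1 + θ) ^ (2 * m + 1) * ((1 - θ) * Pint) := by rw [hpow1]
    have w2 : (1 + θ) ^ (2 * m + 1) * ((1 - θ) * Pint) ≤ 2 ^ (2 * m + 1) * (2 * Pint) := by
      have b2 : (1 - θ) * Pint ≤ 2 * Pint := mul_le_mul_of_nonneg_right (by linarith) hP.le
      exact mul_le_mul a2 b2 (mul_nonneg f0.le hP.le) (by positivity)
    have u3 : (1 + θ) ^ (2 * m + 1 + 1) * Pint ≤ 2 ^ (2 * m + 1) * (2 * Pint) := by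
      rw [pow_succ]
      have b2 : (1 + θ) * Pint ≤ 2 * Pint := mul_le_mul_of_nonneg_right (by linarith) hP.le
      calc (1 + θ) ^ (2 * m + 1) * (1 + θ) * Pint
          = (1 + θ) ^ (2 * m + 1) * ((1 + θ) * Pint) := by ring
        _ ≤ 2 ^ (2 * m + 1) * (2 * Pint) :=
            mul_le_mul a2 b2 (mul_nonneg f2.le hP.le) (by positivity)
    have u4 : (1 - θ) ^ (2 * m + 1 + 1) * Pint ≤ 2 ^ (2 * m + 1) * (2 * Pint) := by
      rw [pow_succ]
      have b2 : (1 - θ) * Pint ≤ 2 * Pint := mul_le_mul_of_nonneg_right (by linarith) hP.le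
      calc (1 - θ) ^ (2 * m + 1) * (1 - θ) * Pint
          = (1 - θ) ^ (2 * m + 1) * ((1 - θ) * Pint) := by ring
        _ ≤ 2 ^ (2 * m + 1) * (2 * Pint) :=
            mul_le_mul a1 b2 (mul_nonneg f0.le hP.le) (by positivity)
    have hqbr_up : (1 - θ ^ 2) ^ (2 * m + 1)
        * ((1 + θ) * Jint (2 * m + 1) θ + 1 * (1 - θ) * Jint (2 * m + 1) (-θ)
          + 1 * (1 + θ) * ((1 - θ) ^ (2 * m + 1))⁻¹ * Pint
          + (1 - θ) * ((1 + θ) ^ (2 * m + 1))⁻¹ * Pint)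
        ≤ 2 ^ (2 * m + 1) * (2 * Pint) * 4 := by
      ring_nf at u1 u1e w1 u2 u2e w2 l3 l4 u3 u4 ⊢
      linarith
    -- conclude
    have hqchi_low : Pint * (Real.sqrt (2 * π))⁻¹
        ≤ (1 - θ ^ 2) ^ (2 * m + 1) * chi (2 * m + 1 + 1) θ := by
      rw [hchi]
      calc Pint * (Real.sqrt (2 * π))⁻¹
          ≤ ((1 - θ ^ 2) ^ (2 * m + 1)
            * ((1 + θ) * Jint (2 * m + 1) θ + 1 * (1 - θ) * Jint (2 * m + 1) (-θ)
              + 1 * (1 + θ) * ((1 - θ) ^ (2 * m + 1))⁻¹ * Pint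
              + (1 - θ) * ((1 + θ) ^ (2 * m + 1))⁻¹ * Pint)) * (Real.sqrt (2 * π))⁻¹ :=
            mul_le_mul_of_nonneg_right hqbr_low hs.le
        _ = _ := by ring
    have hqchi_up : (1 - θ ^ 2) ^ (2 * m + 1) * chi (2 * m + 1 + 1) θ
        ≤ (2 ^ (2 * m + 1) * (2 * Pint) * 4) * (Real.sqrt (2 * π))⁻¹ := by
      rw [hchi]
      calc (1 - θ ^ 2) ^ (2 * m + 1)
          * (((1 + θ) * Jint (2 * m + 1) θ + 1 * (1 - θ) * Jint (2 * m + 1) (-θ)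
            + 1 * (1 + θ) * ((1 - θ) ^ (2 * m + 1))⁻¹ * Pint
            + (1 - θ) * ((1 + θ) ^ (2 * m + 1))⁻¹ * Pint) * (Real.sqrt (2 * π))⁻¹)
          = ((1 - θ ^ 2) ^ (2 * m + 1)
            * ((1 + θ) * Jint (2 * m + 1) θ + 1 * (1 - θ) * Jint (2 * m + 1) (-θ)
              + 1 * (1 + θ) * ((1 - θ) ^ (2 * m + 1))⁻¹ * Pint
              + (1 - θ) * ((1 + θ) ^ (2 * m + 1))⁻¹ * Pint)) * (Real.sqrt (2 * π))⁻¹ := by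
            ring
        _ ≤ (2 ^ (2 * m + 1) * (2 * Pint) * 4) * (Real.sqrt (2 * π))⁻¹ :=
            mul_le_mul_of_nonneg_right hqbr_up hs.le
    constructor
    · rw [hxi]
      have h := mul_le_mul_of_nonneg_left hqchi_up hfac.le
      ring_nf at h ⊢
      linarith
    · rw [hxi]
      have h := mul_le_mul_of_nonneg_left hqchi_low hfac.le
      ring_nf at h ⊢
      linarith
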